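/- Let A, B be bounded operators between Hilbert spaces with B having closed range. If range(A) ⊆ range(B), range(A*) ⊆ range(B*), and A B† A = A (where B† is the bounded Moore-Penrose inverse of B), then A ≤⁻ B in the minus order: the operators Q := B† A and Q̃ := (B*)† A* are bounded idempotents satisfying B Q = A and B* Q̃ = A*. -/

import Mathlib

open ContinuousLinearMap

/-- The orthogonal projection onto the closure of the range of `A`. -/
noncomputable def projCR {E F : Type*} [NormedAddCommGroup E] [InnerProductSpace ℂ E]
    [NormedAddCommGroup F] [InnerProductSpace ℂ F] [CompleteSpace F]
    (A : E →L[ℂ] F) : F →L[ℂ] F :=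
  (LinearMap.range (A : E →ₗ[ℂ] F)).topologicalClosure.subtypeL ∘L
    Submodule.orthogonalProjectionOnto (LinearMap.range (A : E →ₗ[ℂ] F)).topologicalClosure

/-- `Td` is the (bounded) Moore-Penrose inverse of `T`: `T Td = P_T`, `Td T = P_{T*}`,
and `Td T Td = Td`. -/
def IsMPInv {E F : Type*} [NormedAddCommGroup E] [InnerProductSpace ℂ E] [CompleteSpace E]
    [NormedAddCommGroup F] [InnerProductSpace ℂ F] [CompleteSpace F]
    (T : E →L[ℂ] F) (Td : F →L[ℂ] E) : Prop :=
  T ∘L Td = projCR T ∧ Td ∘L T = projCR (adjoint T) ∧ Td ∘L (T ∘L Td) = Td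

lemma projCR_comp {E E' F : Type*} [NormedAddCommGroup E] [InnerProductSpace ℂ E]
    [NormedAddCommGroup E'] [InnerProductSpace ℂ E']
    [NormedAddCommGroup F] [InnerProductSpace ℂ F] [CompleteSpace F]
    (A : E →L[ℂ] F) (C : E' →L[ℂ] F)
    (h : LinearMap.range (C : E' →ₗ[ℂ] F) ≤ (LinearMap.range (A : E →ₗ[ℂ] F)).topologicalClosure) :
    projCR A ∘L C = C := by
  ext x
  simp only [projCR, coe_comp', Function.comp_apply, Submodule.coe_subtypeL',
    Submodule.coe_subtype]
  exact Submodule.starProjection_eq_self_iff.mpr (h ⟨x, rfl⟩)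

lemma projCR_selfAdjoint {E F : Type*} [NormedAddCommGroup E] [InnerProductSpace ℂ E]
    [NormedAddCommGroup F] [InnerProductSpace ℂ F] [CompleteSpace F]
    (A : E →L[ℂ] F) : adjoint (projCR A) = projCR A :=
  (isSelfAdjoint_starProjection _)

variable {H K : Type*} [NormedAddCommGroup H] [InnerProductSpace ℂ H] [CompleteSpace H]
  [NormedAddCommGroup K] [InnerProductSpace ℂ K] [CompleteSpace K]

theorem stmt9 (A B : H →L[ℂ] K) (Bd : K →L[ℂ] H)
    (hB : IsClosed (LinearMap.range (B : H →ₗ[ℂ] K) : Set K)) (hBd : IsMPInv B Bd)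
    (h1 : LinearMap.range (A : H →ₗ[ℂ] K) ≤ LinearMap.range (B : H →ₗ[ℂ] K))
    (h2 : LinearMap.range (adjoint A : K →ₗ[ℂ] H) ≤ LinearMap.range (adjoint B : K →ₗ[ℂ] H))
    (h3 : A ∘L (Bd ∘L A) = A) :
    (Bd ∘L A) ∘L (Bd ∘L A) = Bd ∘L A ∧
    ((adjoint Bd) ∘L (adjoint A)) ∘L ((adjoint Bd) ∘L (adjoint A)) =
      (adjoint Bd) ∘L (adjoint A) ∧
    B ∘L (Bd ∘L A) = A ∧
    (adjoint B) ∘L ((adjoint Bd) ∘L (adjoint A)) = adjoint A := by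
  obtain ⟨hQ, hP, _⟩ := hBd
  have key3 : B ∘L (Bd ∘L A) = A := by
    rw [← ContinuousLinearMap.comp_assoc, hQ,
      projCR_comp B A (le_trans h1 (Submodule.le_topologicalClosure _))]
  have key4 : A ∘L (Bd ∘L B) = A := by
    rw [hP]
    have h' : projCR (adjoint B) ∘L adjoint A = adjoint A :=
      projCR_comp (adjoint B) (adjoint A) (le_trans h2 (Submodule.le_topologicalClosure _))
    calc A ∘L projCR (adjoint B)
        = adjoint (projCR (adjoint B) ∘L adjoint A) := by
          rw [adjoint_comp, projCR_selfAdjoint, adjoint_adjoint]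
      _ = A := by rw [h', adjoint_adjoint]
  refine ⟨?_, ?_, key3, ?_⟩
  · rw [ContinuousLinearMap.comp_assoc Bd A (Bd ∘L A), h3]
  · have : (A ∘L Bd) ∘L (A ∘L Bd) = A ∘L Bd := by
      rw [ContinuousLinearMap.comp_assoc A Bd (A ∘L Bd),
        ← ContinuousLinearMap.comp_assoc Bd A Bd,
        ← ContinuousLinearMap.comp_assoc A (Bd ∘L A) Bd, h3]
    calc (adjoint Bd ∘L adjoint A) ∘L (adjoint Bd ∘L adjoint A)
        = adjoint ((A ∘L Bd) ∘L (A ∘L Bd)) := by simp [adjoint_comp]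
      _ = adjoint Bd ∘L adjoint A := by rw [this, adjoint_comp]
  · calc adjoint B ∘L (adjoint Bd ∘L adjoint A)
        = adjoint (A ∘L (Bd ∘L B)) := by
          simp [adjoint_comp, ContinuousLinearMap.comp_assoc]
      _ = adjoint A := by rw [key4]
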